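/- Let d, m, s be nonnegative integers with d ≥ max{s, 2} and m ≥ s + 2. Let 𝒜 be a simplicial complex with |V(𝒜)| = d and |𝒜| ≥ 2^d - m + 1, containing exactly d - s sets of size d - 1. Then there exists a nonnegative integer r with 2^r ≤ m - 1 and r ≤ s such that ∑_{F ∈ 𝒜} 1/(|F|+1) ≥ (2^{d+1} - 2)/(d+1) - (s/d + (m-2-s)/(d+1-r)). -/

import Mathlib

open Finset

lemma pow_sum_aux (V : Finset ℕ) :
    ∑ F ∈ V.powerset, (1:ℚ)/((F.card:ℚ)+1) = ((2:ℚ)^(V.card+1) - 1)/((V.card:ℚ)+1) := by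
  set n := V.card with hn
  rw [Finset.sum_powerset]
  have h1 : ∀ j ∈ Finset.range (n+1), ∑ t ∈ Finset.powersetCard j V, (1:ℚ)/((t.card:ℚ)+1)
      = ((n+1).choose (j+1) : ℚ) / ((n:ℚ)+1) := by
    intro j _
    rw [Finset.sum_powersetCard j V (fun k => (1:ℚ)/((k:ℚ)+1)), ← hn]
    have hc := Nat.add_one_mul_choose_eq n j
    have hj : ((j:ℚ)+1) ≠ 0 := by positivity
    have hn1 : ((n:ℚ)+1) ≠ 0 := by positivity
    have hc' : ((n:ℚ)+1) * (n.choose j : ℚ) = ((n+1).choose (j+1) : ℚ) * ((j:ℚ)+1) := by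
      exact_mod_cast congrArg (fun x : ℕ => (x:ℚ)) hc
    rw [nsmul_eq_mul, mul_one_div, div_eq_div_iff hj hn1]
    linarith
  rw [Finset.sum_congr rfl h1, ← Finset.sum_div]
  congr 1
  have h2 : ∑ j ∈ Finset.range (n+1), ((n+1).choose (j+1)) = 2^(n+1) - 1 := by
    have h3 := Nat.sum_range_choose (n+1)
    rw [Finset.sum_range_succ' _ (n+1)] at h3
    simp at h3
    omega
  have h4 := congrArg (fun x : ℕ => (x:ℚ)) h2
  have h5 : (1:ℕ) ≤ 2^(n+1) := Nat.one_le_two_pow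
  push_cast [Nat.cast_sub h5] at h4
  rw [h4]

theorem local_lemma (d m s : ℕ) (hds : s ≤ d) (hd2 : 2 ≤ d) (hm : s + 2 ≤ m)
    (A : Finset (Finset ℕ)) (hne : A.Nonempty)
    (hdc : ∀ X ∈ A, ∀ Y ⊆ X, Y ∈ A)
    (hVcard : (A.sup id).card = d)
    (hAcard : 2 ^ d - m + 1 ≤ A.card)
    (hlayer : (A.filter (fun F => F.card = d - 1)).card = d - s) :
    ∃ r : ℕ, 2 ^ r ≤ m - 1 ∧ r ≤ s ∧
      ((2 : ℚ) ^ (d + 1) - 2) / ((d : ℚ) + 1) -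
          ((s : ℚ) / (d : ℚ) + ((m : ℚ) - 2 - (s : ℚ)) / ((d : ℚ) + 1 - (r : ℚ))) ≤
        ∑ F ∈ A, (1 : ℚ) / ((F.card : ℚ) + 1) := by
  classical
  set V := A.sup id with hV
  have hsub : ∀ F ∈ A, F ⊆ V := fun F hF => Finset.le_sup (f := id) hF
  have hAP : A ⊆ V.powerset := fun F hF => Finset.mem_powerset.2 (hsub F hF)
  have hPcard : V.powerset.card = 2^d := by rw [Finset.card_powerset, hVcard]
  have hAle : A.card ≤ 2^d := hPcard ▸ Finset.card_le_card hAP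
  set M := V.powerset \ A with hM
  have hMcard : M.card = 2^d - A.card := by rw [hM, Finset.card_sdiff_of_subset hAP, hPcard]
  have hmge : 2 ≤ m := by omega
  have hMle : M.card ≤ m - 1 := by omega
  have hPS := pow_sum_aux V
  rw [hVcard] at hPS
  have hsplit := Finset.sum_sdiff (f := fun F => (1:ℚ)/((F.card:ℚ)+1)) hAP
  rw [← hM, hPS] at hsplit
  have hdQ : (0:ℚ) < (d:ℚ) := by exact_mod_cast (by omega : 0 < d)
  have hempty : ∅ ∈ A := hdc _ hne.choose_spec ∅ (Finset.empty_subset _)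
  have hlayerP : (V.powerset.filter (fun F => F.card = d-1)).card = d := by
    rw [← Finset.powersetCard_eq_filter, Finset.card_powersetCard, hVcard]
    rw [← Nat.choose_symm (by omega : d - 1 ≤ d)]
    simp [Nat.sub_sub_self (by omega : 1 ≤ d)]
  have hMfilter : M.filter (fun F => F.card = d-1)
      = (V.powerset.filter (fun F => F.card = d-1)) \ (A.filter (fun F => F.card = d-1)) := by
    rw [hM]; ext F; simp [Finset.mem_sdiff, Finset.mem_filter]; tauto
  have hM1card : (M.filter (fun F => F.card = d-1)).card = s := by
    rw [hMfilter, Finset.card_sdiff_of_subset (Finset.filter_subset_filter _ hAP), hlayerP, hlayer]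
    omega
  rcases eq_or_ne M ∅ with hMe | hMne
  · refine ⟨0, by omega, by omega, ?_⟩
    rw [hMe] at hsplit
    simp only [Finset.sum_empty, zero_add] at hsplit
    rw [hsplit]
    have h1 : (0:ℚ) ≤ (s:ℚ)/(d:ℚ) := by positivity
    have h2 : (0:ℚ) ≤ ((m:ℚ) - 2 - s) / ((d:ℚ) + 1 - ((0:ℕ):ℚ)) := by
      apply div_nonneg
      · have : (s:ℚ) + 2 ≤ m := by exact_mod_cast hm
        linarith
      · push_cast; linarith
    have h3 : ((2:ℚ)^(d+1) - 2)/((d:ℚ)+1) ≤ ((2:ℚ)^(d+1) - 1)/((d:ℚ)+1) := by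
      apply div_le_div_of_nonneg_right ?_ ?_ <;> [linarith; linarith]
    linarith
  · obtain ⟨F0, hF0M, hmin⟩ := M.exists_min_image (fun F => F.card)
      (Finset.nonempty_iff_ne_empty.2 hMne)
    have hF0Msd := hM ▸ hF0M
    have hF0V : F0 ⊆ V := Finset.mem_powerset.1 (Finset.mem_sdiff.1 hF0Msd).1
    have hF0A : F0 ∉ A := (Finset.mem_sdiff.1 hF0Msd).2
    have hF0le : F0.card ≤ d := hVcard ▸ Finset.card_le_card hF0V
    have hF0pos : 1 ≤ F0.card := by
      rcases Nat.eq_zero_or_pos F0.card with h | h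
      · exact absurd (Finset.card_eq_zero.1 h ▸ hF0A) (by simp [hempty])
      · exact h
    refine ⟨d - F0.card, ?_, ?_, ?_⟩
    · have hS : ((V \ F0).powerset.image (· ∪ F0)) ⊆ M := by
        intro G hG
        obtain ⟨G', hG', rfl⟩ := Finset.mem_image.1 hG
        rw [Finset.mem_powerset] at hG'
        have hGV : G' ∪ F0 ⊆ V := Finset.union_subset (hG'.trans Finset.sdiff_subset) hF0V
        rw [hM]
        exact Finset.mem_sdiff.2 ⟨Finset.mem_powerset.2 hGV,
          fun hGA => hF0A (hdc _ hGA F0 Finset.subset_union_right)⟩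
      have hinj : Set.InjOn (· ∪ F0) ((V \ F0).powerset : Set (Finset ℕ)) := by
        intro G1 h1 G2 h2 h12
        rw [Finset.mem_coe, Finset.mem_powerset] at h1 h2
        have d1 : Disjoint G1 F0 := Finset.disjoint_of_subset_left h1 Finset.sdiff_disjoint
        have d2 : Disjoint G2 F0 := Finset.disjoint_of_subset_left h2 Finset.sdiff_disjoint
        have h13 := congrArg (fun X => X \ F0) h12
        simpa [Finset.union_sdiff_cancel_right d1, Finset.union_sdiff_cancel_right d2] using h13
      have hcard : ((V \ F0).powerset.image (· ∪ F0)).card = 2^(d - F0.card) := by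
        rw [Finset.card_image_of_injOn hinj, Finset.card_powerset,
          Finset.card_sdiff_of_subset hF0V, hVcard]
      calc 2^(d - F0.card) = ((V \ F0).powerset.image (· ∪ F0)).card := hcard.symm
        _ ≤ M.card := Finset.card_le_card hS
        _ ≤ m - 1 := hMle
    · have hT : ((V \ F0).image (fun x => V.erase x)) ⊆ M.filter (fun F => F.card = d-1) := by
        intro G hG
        obtain ⟨x, hx, rfl⟩ := Finset.mem_image.1 hG
        rw [Finset.mem_sdiff] at hx
        refine Finset.mem_filter.2 ⟨?_, by rw [Finset.card_erase_of_mem hx.1, hVcard]⟩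
        rw [hM]
        refine Finset.mem_sdiff.2 ⟨Finset.mem_powerset.2 (Finset.erase_subset _ _), ?_⟩
        intro hGA
        exact hF0A (hdc _ hGA F0 (Finset.subset_erase.2 ⟨hF0V, hx.2⟩))
      have hinj : Set.InjOn (fun x => V.erase x) ((V \ F0) : Finset ℕ) := by
        intro x hx y hy hxy
        rw [Finset.mem_coe, Finset.mem_sdiff] at hx hy
        exact Finset.erase_injOn V hx.1 hy.1 hxy
      have hle : (V \ F0).card ≤ s := by
        rw [← hM1card, ← Finset.card_image_of_injOn hinj]
        exact Finset.card_le_card hT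
      rwa [Finset.card_sdiff_of_subset hF0V, hVcard] at hle
    · set r := d - F0.card with hr
      have hVM : V ∈ M := by
        rw [hM]
        exact Finset.mem_sdiff.2 ⟨Finset.mem_powerset_self V,
          fun hVA => hF0A (hdc _ hVA F0 hF0V)⟩
      set M1 := M.filter (fun F => F.card = d-1) with hM1
      have hVnotM1 : V ∉ M1 := by
        intro h
        have := (Finset.mem_filter.1 h).2
        rw [hVcard] at this; omega
      set B := insert V M1 with hB
      have hBsub : B ⊆ M := Finset.insert_subset hVM (Finset.filter_subset _ _)
      have hBcard : B.card = s + 1 := by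
        rw [hB, Finset.card_insert_of_notMem hVnotM1, hM1card]
      have hssplit := Finset.sum_sdiff (f := fun F => (1:ℚ)/((F.card:ℚ)+1)) hBsub
      have hsumB : ∑ F ∈ B, (1:ℚ)/((F.card:ℚ)+1) = 1/((d:ℚ)+1) + (s:ℚ)/(d:ℚ) := by
        rw [hB, Finset.sum_insert hVnotM1, hVcard]
        congr 1
        have hc : ∀ F ∈ M1, (1:ℚ)/((F.card:ℚ)+1) = 1/(d:ℚ) := by
          intro F hF
          have h1 : F.card = d - 1 := (Finset.mem_filter.1 hF).2
          have h2 : ((F.card : ℚ)+1) = (d:ℚ) := by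
            rw [h1, Nat.cast_sub (by omega : 1 ≤ d)]
            ring
          rw [h2]
        rw [Finset.sum_congr rfl hc, Finset.sum_const, hM1card, nsmul_eq_mul, mul_one_div]
      have hMBcard : (M \ B).card ≤ m - 2 - s := by
        rw [Finset.card_sdiff_of_subset hBsub, hBcard]
        omega
      have hdr : (0:ℚ) < (d:ℚ) + 1 - (r:ℚ) := by
        have : (r:ℚ) ≤ (d:ℚ) := by exact_mod_cast (by omega : r ≤ d)
        linarith
      have hsumMB : ∑ F ∈ M \ B, (1:ℚ)/((F.card:ℚ)+1)
          ≤ ((m:ℚ) - 2 - (s:ℚ)) / ((d:ℚ) + 1 - (r:ℚ)) := by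
        have hbound : ∀ F ∈ M \ B, (1:ℚ)/((F.card:ℚ)+1) ≤ 1/((d:ℚ)+1-(r:ℚ)) := by
          intro F hF
          have hFM : F ∈ M := (Finset.mem_sdiff.1 hF).1
          have h1 : F0.card ≤ F.card := hmin F hFM
          have h2 : (d:ℚ) + 1 - (r:ℚ) ≤ (F.card:ℚ) + 1 := by
            have h4 : ((F0.card:ℕ):ℚ) ≤ (F.card:ℚ) := by exact_mod_cast h1
            have h3 : ((F0.card:ℕ):ℚ) = (d:ℚ) - (r:ℚ) := by
              have h5 : F0.card = d - r := by omega
              rw [h5, Nat.cast_sub (by omega : r ≤ d)]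
            linarith
          exact one_div_le_one_div_of_le hdr h2
        have hcQ : ((M \ B).card : ℚ) ≤ (m:ℚ) - 2 - (s:ℚ) := by
          have h2 : (((M \ B).card:ℕ) : ℚ) ≤ ((m - 2 - s : ℕ) : ℚ) := by exact_mod_cast hMBcard
          have h3 : ((m - 2 - s : ℕ):ℚ) = (m:ℚ) - 2 - s := by
            rw [Nat.cast_sub (by omega : s ≤ m - 2), Nat.cast_sub (by omega : 2 ≤ m)]
            push_cast; ring
          linarith
        calc ∑ F ∈ M \ B, (1:ℚ)/((F.card:ℚ)+1)
            ≤ (M \ B).card • (1/((d:ℚ)+1-(r:ℚ))) := Finset.sum_le_card_nsmul _ _ _ hbound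
          _ = ((M \ B).card : ℚ) * (1/((d:ℚ)+1-(r:ℚ))) := by rw [nsmul_eq_mul]
          _ ≤ ((m:ℚ) - 2 - (s:ℚ)) / ((d:ℚ) + 1 - (r:ℚ)) := by
              rw [mul_one_div]
              exact div_le_div_of_nonneg_right hcQ hdr.le
      have hid : ((2:ℚ)^(d+1) - 2)/((d:ℚ)+1)
          = ((2:ℚ)^(d+1) - 1)/((d:ℚ)+1) - 1/((d:ℚ)+1) := by
        ring
      linarith
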